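/- Let F > 0 and 0 < H_R < 1 with √H_R + H_R > F, and set ν := 1/√H_R, H₃ := ν² H_R/(ν+1)², H_s := (F ν²/(ν+1))^{2/3} H_R. Then for every H with H_R < H < 1 one has H > H_s, the denominator (H−H_s)(H²+HH_s+H_s²) is strictly positive, and F²(H−1)(H−H_R)(H−H₃)/((H−H_s)(H²+HH_s+H_s²)) < 0. In particular smooth hydraulic shock profiles are strictly decreasing. -/

import Mathlib

open Real

/-- `ν := 1/√H_R`. -/
noncomputable def nuOf (HR : ℝ) : ℝ := 1 / Real.sqrt HR

/-- `H₃ := ν² H_R/(ν+1)²`. -/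
noncomputable def H3 (HR : ℝ) : ℝ := nuOf HR ^ 2 * HR / (nuOf HR + 1) ^ 2

/-- `H_s := (F ν²/(ν+1))^{2/3} H_R`. -/
noncomputable def Hs (F HR : ℝ) : ℝ := (F * nuOf HR ^ 2 / (nuOf HR + 1)) ^ ((2 : ℝ) / 3) * HR

/-- On the range `H_R < H < 1` of a smooth profile, the profile vector field is
negative: `H > H_s`, the denominator is positive, and the full rational
expression is negative, so smooth profiles are strictly decreasing. -/
theorem profile_vector_field_neg (F HR : ℝ) (hF : 0 < F) (h0 : 0 < HR) (h1 : HR < 1)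
    (hdom : Real.sqrt HR + HR > F) :
    ∀ H : ℝ, HR < H → H < 1 →
      Hs F HR < H ∧
      0 < (H - Hs F HR) * (H ^ 2 + H * Hs F HR + Hs F HR ^ 2) ∧
      F ^ 2 * (H - 1) * (H - HR) * (H - H3 HR) /
        ((H - Hs F HR) * (H ^ 2 + H * Hs F HR + Hs F HR ^ 2)) < 0 := by
  intro H hHR hH1
  set s := Real.sqrt HR with hs
  have hs0 : 0 < s := Real.sqrt_pos.mpr h0
  have hs2 : s ^ 2 = HR := Real.sq_sqrt h0.le
  -- base of the rpow
  have hnu0 : nuOf HR = 1 / s := rfl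
  have hs1 : s < 1 := by
    have := Real.sqrt_lt_sqrt h0.le h1
    simpa [hs] using this
  have hbase : F * nuOf HR ^ 2 / (nuOf HR + 1) = F / (s + HR) := by
    rw [hnu0, ← hs2]
    field_simp
  have hsHR : 0 < s + HR := by positivity
  have hb0 : 0 < F / (s + HR) := div_pos hF hsHR
  have hb1 : F / (s + HR) < 1 := (div_lt_one hsHR).mpr hdom
  have hrpow1 : (F * nuOf HR ^ 2 / (nuOf HR + 1)) ^ ((2 : ℝ) / 3) < 1 := by
    rw [hbase]
    exact Real.rpow_lt_one hb0.le hb1 (by norm_num)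
  have hrpow0 : 0 < (F * nuOf HR ^ 2 / (nuOf HR + 1)) ^ ((2 : ℝ) / 3) := by
    rw [hbase]; exact Real.rpow_pos_of_pos hb0 _
  have hHs0 : 0 < Hs F HR := mul_pos hrpow0 h0
  have hHsHR : Hs F HR < HR := by
    have := mul_lt_mul_of_pos_right hrpow1 h0
    simpa [Hs] using this
  have hHsH : Hs F HR < H := hHsHR.trans hHR
  have hH0 : 0 < H := h0.trans hHR
  have hden : 0 < (H - Hs F HR) * (H ^ 2 + H * Hs F HR + Hs F HR ^ 2) := by
    apply mul_pos (by linarith)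
    positivity
  refine ⟨hHsH, hden, ?_⟩
  have hH3 : H3 HR < HR := by
    have hnu : nuOf HR ^ 2 * HR = 1 := by
      rw [hnu0, ← hs2]; field_simp
    have hnu1 : 1 < nuOf HR := by
      rw [hnu0, lt_div_iff₀ hs0, one_mul]
      exact hs1
    have hsq : nuOf HR ^ 2 < (nuOf HR + 1) ^ 2 := by nlinarith
    rw [H3, div_lt_iff₀ (by positivity)]
    nlinarith [mul_lt_mul_of_pos_left hsq h0]
  have hnum : F ^ 2 * (H - 1) * (H - HR) * (H - H3 HR) < 0 := by
    have h1' : H - 1 < 0 := by linarith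
    have h2' : 0 < H - HR := by linarith
    have h3' : 0 < H - H3 HR := by linarith
    nlinarith [sq_nonneg F, mul_pos h2' h3', mul_pos (mul_pos (pow_pos hF 2) h2') h3']
  exact div_neg_of_neg_of_pos hnum hden
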